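/- Let S, A be finite, π a policy, P a transition kernel, γ ∈ [0,1), d₀ an initial distribution, and define β_t as the state distribution at time t under π. For any bounded x : S × A → ℝ and ν defined by ν(s,a) = x(s,a) + γ·∑_{s'} P(s,a,s')·∑_{a'} π(s',a')·ν(s',a'), we have (1−γ)·∑_{t=0}^∞ γ^t E_{s∼β_t, a∼π}[x(s,a)] = (1−γ)·E_{s∼d₀, a∼π}[ν(s,a)]. -/

import Mathlib

lemma conv_bound {ι : Type*} [Fintype ι] (w v : ι → ℝ) (hw : ∀ i, 0 ≤ w i)
    (hw1 : ∑ i, w i = 1) {C : ℝ} (hv : ∀ i, |v i| ≤ C) :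
    |∑ i, w i * v i| ≤ C := by
  calc |∑ i, w i * v i| ≤ ∑ i, |w i * v i| := Finset.abs_sum_le_sum_abs _ _
    _ ≤ ∑ i, w i * C := by
        apply Finset.sum_le_sum
        intro i _
        rw [abs_mul, abs_of_nonneg (hw i)]
        exact mul_le_mul_of_nonneg_left (hv i) (hw i)
    _ = C := by rw [← Finset.sum_mul, hw1, one_mul]

lemma sum_rotate {α β γ : Type*} [Fintype α] [Fintype β] [Fintype γ] (F : α → β → γ → ℝ) :
    ∑ a, ∑ b, ∑ c, F a b c = ∑ c, ∑ a, ∑ b, F a b c := by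
  have h1 : ∀ a, ∑ b, ∑ c, F a b c = ∑ c, ∑ b, F a b c := fun a => Finset.sum_comm
  simp only [h1]
  exact Finset.sum_comm

theorem stmt_18 {S A : Type*} [Fintype S] [Fintype A]
    (π : S → A → ℝ) (hπ : ∀ s, (∀ a, 0 ≤ π s a) ∧ ∑ a, π s a = 1)
    (P : S → A → S → ℝ) (hP : ∀ s a, (∀ s', 0 ≤ P s a s') ∧ ∑ s', P s a s' = 1)
    (γ : ℝ) (hγ0 : 0 ≤ γ) (hγ1 : γ < 1)
    (d0 : S → ℝ) (hd0 : ∀ s, 0 ≤ d0 s) (hd01 : ∑ s, d0 s = 1)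
    (β : ℕ → S → ℝ) (hβ0 : β 0 = d0)
    (hβ : ∀ t s', β (t + 1) s' = ∑ s, ∑ a, β t s * π s a * P s a s')
    (x : S → A → ℝ) (M : ℝ) (hx : ∀ s a, |x s a| ≤ M)
    (ν : S → A → ℝ)
    (hν : ∀ s a, ν s a = x s a + γ * ∑ s', P s a s' * ∑ a', π s' a' * ν s' a') :
    (1 - γ) * ∑' t : ℕ, γ ^ t * ∑ s, ∑ a, β t s * π s a * x s a
      = (1 - γ) * ∑ s, ∑ a, d0 s * π s a * ν s a := by
  -- β t is nonnegative and sums to 1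
  have hβnn : ∀ t s, 0 ≤ β t s := by
    intro t
    induction t with
    | zero => intro s; rw [hβ0]; exact hd0 s
    | succ t ih =>
      intro s'
      rw [hβ t s']
      apply Finset.sum_nonneg; intro s _
      apply Finset.sum_nonneg; intro a _
      exact mul_nonneg (mul_nonneg (ih s) ((hπ s).1 a)) ((hP s a).1 s')
  have hβsum : ∀ t, ∑ s, β t s = 1 := by
    intro t
    induction t with
    | zero => rw [hβ0]; exact hd01
    | succ t ih =>
      have : ∑ s', β (t+1) s' = ∑ s, ∑ a, β t s * π s a := by
        simp only [hβ]
        rw [Finset.sum_comm]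
        congr 1; ext s
        rw [Finset.sum_comm]
        congr 1; ext a
        rw [← Finset.mul_sum, (hP s a).2, mul_one]
      rw [this]
      calc ∑ s, ∑ a, β t s * π s a = ∑ s, β t s := by
            congr 1; ext s; rw [← Finset.mul_sum, (hπ s).2, mul_one]
        _ = 1 := ih
  -- bound on ν
  obtain ⟨C, hC⟩ : ∃ C, ∀ s a, |ν s a| ≤ C := by
    rcases isEmpty_or_nonempty S with h | h
    · exact ⟨0, fun s a => absurd (hd01) (by simp [Finset.univ_eq_empty])⟩
    rcases isEmpty_or_nonempty A with h2 | h2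
    · obtain ⟨s⟩ := h
      exact ⟨0, fun s a => (IsEmpty.false a).elim⟩
    obtain ⟨⟨s0, a0⟩, _, hmax⟩ := Finset.exists_max_image Finset.univ
      (fun p : S × A => |ν p.1 p.2|) ⟨⟨Classical.arbitrary S, Classical.arbitrary A⟩, Finset.mem_univ _⟩
    exact ⟨|ν s0 a0|, fun s a => hmax ⟨s, a⟩ (Finset.mem_univ _)⟩
  have hC0 : 0 ≤ C := by
    rcases isEmpty_or_nonempty S with h | h
    · exact absurd hd01 (by simp [Finset.univ_eq_empty])
    rcases isEmpty_or_nonempty A with h2 | h2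
    · obtain ⟨s⟩ := h
      have := (hπ s).2
      simp [Finset.univ_eq_empty] at this
    obtain ⟨s⟩ := h
    obtain ⟨a⟩ := h2
    exact (abs_nonneg (ν s a)).trans (hC s a)
  -- f t : expectation of ν at time t
  set f : ℕ → ℝ := fun t => ∑ s, ∑ a, β t s * π s a * ν s a with hf
  have hfbound : ∀ t, |f t| ≤ C := by
    intro t
    have : f t = ∑ s, β t s * (∑ a, π s a * ν s a) := by
      simp only [hf, Finset.mul_sum, mul_assoc]
    rw [this]
    apply conv_bound _ _ (hβnn t) (hβsum t)
    intro s
    exact conv_bound _ _ (hπ s).1 (hπ s).2 (fun a => hC s a)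
  -- key telescoping identity
  set g : ℕ → ℝ := fun t => γ ^ t * f t with hg
  have key : ∀ t, γ ^ t * (∑ s, ∑ a, β t s * π s a * x s a) = g t - g (t + 1) := by
    intro t
    have hmid : ∑ s, ∑ a, β t s * π s a * (∑ s', P s a s' * ∑ a', π s' a' * ν s' a')
        = f (t + 1) := by
      have hf1 : f (t + 1) = ∑ s', β (t + 1) s' * ∑ a', π s' a' * ν s' a' := by
        simp only [hf, Finset.mul_sum, mul_assoc]
      rw [hf1]
      have step : ∀ s a, β t s * π s a * (∑ s', P s a s' * ∑ a', π s' a' * ν s' a')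
          = ∑ s', β t s * π s a * (P s a s' * ∑ a', π s' a' * ν s' a') :=
        fun s a => Finset.mul_sum _ _ _
      simp only [step]
      rw [sum_rotate]
      apply Finset.sum_congr rfl; intro s' _
      rw [hβ, Finset.sum_mul]
      apply Finset.sum_congr rfl; intro s _
      rw [Finset.sum_mul]
      apply Finset.sum_congr rfl; intro a _
      ring
    have hx' : ∀ s a, x s a = ν s a - γ * ∑ s', P s a s' * ∑ a', π s' a' * ν s' a' := by
      intro s a; rw [hν s a]; ring
    have : ∑ s, ∑ a, β t s * π s a * x s a
        = f t - γ * (∑ s, ∑ a, β t s * π s a * (∑ s', P s a s' * ∑ a', π s' a' * ν s' a')) := by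
      have e : ∀ s a, β t s * π s a * x s a
          = β t s * π s a * ν s a
            - γ * (β t s * π s a * (∑ s', P s a s' * ∑ a', π s' a' * ν s' a')) := by
        intro s a; rw [hx' s a]; ring
      simp only [hf, e, Finset.sum_sub_distrib, ← Finset.mul_sum]
    rw [this, hmid, hg]
    simp only []
    ring
  -- summability
  have habs : ∀ t, |∑ s, ∑ a, β t s * π s a * x s a| ≤ M := by
    intro t
    have : (∑ s, ∑ a, β t s * π s a * x s a) = ∑ s, β t s * (∑ a, π s a * x s a) := by
      simp only [Finset.mul_sum, mul_assoc]
    rw [this]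
    apply conv_bound _ _ (hβnn t) (hβsum t)
    intro s
    exact conv_bound _ _ (hπ s).1 (hπ s).2 (fun a => hx s a)
  have hM0 : 0 ≤ M := by
    rcases isEmpty_or_nonempty S with h | h
    · exact absurd hd01 (by simp [Finset.univ_eq_empty])
    rcases isEmpty_or_nonempty A with h2 | h2
    · have := (hπ (Classical.arbitrary S)).2
      simp [Finset.univ_eq_empty] at this
    exact le_trans (abs_nonneg _) (hx (Classical.arbitrary S) (Classical.arbitrary A))
  have hsummable : Summable (fun t : ℕ => γ ^ t * ∑ s, ∑ a, β t s * π s a * x s a) := by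
    apply Summable.of_norm_bounded (g := fun t : ℕ => γ ^ t * M)
    · exact (summable_geometric_of_lt_one hγ0 hγ1).mul_right M
    · intro t
      rw [Real.norm_eq_abs, abs_mul, abs_pow, abs_of_nonneg hγ0]
      exact mul_le_mul_of_nonneg_left (habs t) (pow_nonneg hγ0 t)
  -- g tends to 0
  have hgto : Filter.Tendsto g Filter.atTop (nhds 0) := by
    have hbd : ∀ t, ‖g t‖ ≤ γ ^ t * C := by
      intro t
      rw [Real.norm_eq_abs, hg]
      simp only []
      rw [abs_mul, abs_pow, abs_of_nonneg hγ0]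
      exact mul_le_mul_of_nonneg_left (hfbound t) (pow_nonneg hγ0 t)
    have hlim : Filter.Tendsto (fun t : ℕ => γ ^ t * C) Filter.atTop (nhds 0) := by
      have := (tendsto_pow_atTop_nhds_zero_of_lt_one hγ0 hγ1).mul_const C
      simpa using this
    exact squeeze_zero_norm hbd hlim
  -- telescoping tsum
  have hts : ∑' t : ℕ, γ ^ t * ∑ s, ∑ a, β t s * π s a * x s a = g 0 := by
    have h1 := hsummable.hasSum.tendsto_sum_nat
    have h2 : Filter.Tendsto (fun n => ∑ t ∈ Finset.range n, γ ^ t * ∑ s, ∑ a, β t s * π s a * x s a)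
        Filter.atTop (nhds (g 0)) := by
      have heq : ∀ n, ∑ t ∈ Finset.range n, γ ^ t * ∑ s, ∑ a, β t s * π s a * x s a
          = g 0 - g n := by
        intro n
        rw [← Finset.sum_range_sub' g n]
        exact Finset.sum_congr rfl (fun t _ => key t)
      simp only [heq]
      have := (tendsto_const_nhds (x := g 0)).sub hgto
      simpa using this
    exact tendsto_nhds_unique h1 h2
  rw [hts, hg]
  simp only [pow_zero, one_mul, hf, hβ0]
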